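/- Let J = {t₀, t₁, …, t_m} be a finite subset of [0,1] with t₀ = 0 < t₁ < … < t_m = 1, and let S ⊆ (0,1] be a set with the following property: for every l ∈ {0, …, m−1} and every t with t_l < t < t_{l+1}, if t ∈ S then the whole interval [t_l, t_{l+1}) ∩ (0,1] is contained in S. Then the supremum of S (taken in [0,1], with sup ∅ = 0) belongs to J. -/

import Mathlib

/-- If S ⊆ (0,1] is saturated with respect to the intervals determined by the
finite set J = {t₀ = 0 < t₁ < … < t_m = 1} (whenever S contains a point strictly
between two consecutive elements of J, it contains the whole half-open interval
between them, intersected with (0,1]), then sup S ∈ J. -/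
theorem stmt_9 (m : ℕ) (t : Fin (m + 1) → ℝ) (hmono : StrictMono t)
    (h0 : t 0 = 0) (h1 : t (Fin.last m) = 1)
    (S : Set ℝ) (hS : S ⊆ Set.Ioc (0:ℝ) 1)
    (hprop : ∀ l : Fin m, ∀ x ∈ S, t l.castSucc < x → x < t l.succ →
        Set.Ico (t l.castSucc) (t l.succ) ∩ Set.Ioc (0:ℝ) 1 ⊆ S) :
    sSup S ∈ Set.range t := by
  rcases S.eq_empty_or_nonempty with hE | hne
  · refine ⟨0, ?_⟩
    rw [h0, hE, Real.sSup_empty]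
  by_contra hnr
  set s := sSup S with hs
  have hbdd : BddAbove S := ⟨1, fun x hx => (hS hx).2⟩
  have hsle1 : s ≤ 1 := csSup_le hne (fun x hx => (hS hx).2)
  have hspos : 0 < s := by
    obtain ⟨x, hx⟩ := hne
    exact lt_of_lt_of_le (hS hx).1 (le_csSup hbdd hx)
  -- largest index i with t i < s
  have h0s : t 0 < s := by rw [h0]; exact hspos
  set F : Finset (Fin (m+1)) := Finset.univ.filter (fun i => t i < s) with hF
  have hFne : F.Nonempty := ⟨0, by simp [hF, h0s]⟩
  set i := F.max' hFne with hi
  have hts : t i < s := by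
    have := F.max'_mem hFne
    simpa [hF] using this
  have hmax : ∀ j : Fin (m+1), t j < s → j ≤ i := fun j hj =>
    F.le_max' j (by simp [hF, hj])
  have hs1 : s < 1 := lt_of_le_of_ne hsle1 (fun h => hnr ⟨Fin.last m, by rw [h1, h]⟩)
  have hilt : i < Fin.last m := by
    have : t i < t (Fin.last m) := by rw [h1]; exact hts.trans hs1
    exact hmono.lt_iff_lt.mp this
  set l : Fin m := ⟨i.val, by simpa [Fin.lt_iff_val_lt_val, Fin.last] using hilt⟩ with hl
  have hlc : l.castSucc = i := rfl
  have hslt : s < t l.succ := by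
    rcases lt_trichotomy s (t l.succ) with h | h | h
    · exact h
    · exact absurd ⟨l.succ, h.symm⟩ hnr
    · have := hmax l.succ h
      have h2 : l.castSucc < l.succ := Fin.castSucc_lt_succ
      rw [hlc] at h2
      exact absurd this (not_le.mpr h2)
  obtain ⟨x, hxS, hxgt⟩ := exists_lt_of_lt_csSup hne (hlc ▸ hts)
  have hxle : x ≤ s := le_csSup hbdd hxS
  have hxlt : x < t l.succ := lt_of_le_of_lt hxle hslt
  have key := hprop l x hxS hxgt hxlt
  set y := (s + t l.succ) / 2 with hy
  have hys : s < y := by simp [hy]; linarith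
  have hylt : y < t l.succ := by simp [hy]; linarith
  have hyS : y ∈ S := key ⟨⟨le_of_lt (lt_of_le_of_lt (hlc ▸ hts.le) hys), hylt⟩,
    ⟨hspos.trans hys, le_of_lt (lt_of_lt_of_le hylt (by
      have : t l.succ ≤ t (Fin.last m) := hmono.monotone (Fin.le_last _)
      rwa [h1] at this))⟩⟩
  exact absurd (le_csSup hbdd hyS) (not_le.mpr hys)
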